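/- Let G be a locally compact group, S ⊆ G a closed subsemigroup containing the identity with S⁻¹S = G and with nonempty interior. Then for every compact set K ⊆ S × S there exists d ∈ S such that da⁻¹b ∈ S for every (a, b) ∈ K. -/

import Mathlib

/-- Let `G` be a locally compact group, `S ⊆ G` a closed subsemigroup
containing the identity with `S⁻¹S = G` and with nonempty interior.  Then for
every compact set `K ⊆ S × S` there exists `d ∈ S` such that `da⁻¹b ∈ S` for
every `(a, b) ∈ K`. -/
theorem exists_d_compact_subset {G : Type*} [Group G] [TopologicalSpace G]
    [IsTopologicalGroup G] [LocallyCompactSpace G]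
    (S : Submonoid G) (hS : IsClosed (S : Set G))
    (hSG : ∀ g : G, ∃ s ∈ S, ∃ t ∈ S, g = s⁻¹ * t)
    (hint : (interior (S : Set G)).Nonempty)
    (K : Set (G × G)) (hK : IsCompact K) (hKS : K ⊆ (S : Set G) ×ˢ (S : Set G)) :
    ∃ d ∈ S, ∀ a b : G, (a, b) ∈ K → d * a⁻¹ * b ∈ S := by
  classical
  obtain ⟨u, hu⟩ := hint
  -- Directedness of S under left-divisibility
  have dir : ∀ d₁ ∈ S, ∀ d₂ ∈ S, ∃ d ∈ S,
      (∃ s ∈ S, d = s * d₁) ∧ ∃ t ∈ S, d = t * d₂ := by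
    intro d₁ h₁ d₂ h₂
    obtain ⟨s, hs, t, ht, hst⟩ := hSG (d₁ * d₂⁻¹)
    refine ⟨s * d₁, S.mul_mem hs h₁, ⟨s, hs, rfl⟩, ⟨t, ht, ?_⟩⟩
    have : d₁ = s⁻¹ * t * d₂ := by
      rw [← hst]; group
    rw [this]; group
  -- For each p there is d ∈ S with d * p.1⁻¹ * p.2 in the interior of S
  have step : ∀ p : G × G, ∃ d, d ∈ S ∧
      (p ∈ K → d * p.1⁻¹ * p.2 ∈ interior (S : Set G)) := by
    intro p
    by_cases hp : p ∈ K
    · obtain ⟨s, hs, t, ht, hst⟩ := hSG (p.1⁻¹ * p.2)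
      refine ⟨u * s, S.mul_mem (interior_subset hu) hs, fun _ => ?_⟩
      have heq : u * s * p.1⁻¹ * p.2 = u * t := by
        rw [mul_assoc (u * s), hst]; group
      rw [heq]
      have hopen : IsOpen ((fun x => x * t) '' interior (S : Set G)) :=
        (Homeomorph.mulRight t).isOpenMap _ isOpen_interior
      have hsub : ((fun x => x * t) '' interior (S : Set G)) ⊆ (S : Set G) := by
        rintro _ ⟨x, hx, rfl⟩
        exact S.mul_mem (interior_subset hx) ht
      exact interior_maximal hsub hopen ⟨u, hu, rfl⟩
    · exact ⟨1, S.one_mem, fun h => absurd h hp⟩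
  choose D hDS hDK using step
  set U : G × G → Set (G × G) := fun p =>
    {q : G × G | D p * q.1⁻¹ * q.2 ∈ interior (S : Set G)} with hU
  have hUopen : ∀ p, IsOpen (U p) := by
    intro p
    have : Continuous fun q : G × G => D p * q.1⁻¹ * q.2 := by fun_prop
    exact isOpen_interior.preimage this
  obtain ⟨F, hFK, hcover⟩ := hK.elim_nhds_subcover U
    (fun p hp => (hUopen p).mem_nhds (hDK p hp))
  -- Combine the finitely many d's
  have main : ∀ t : Finset (G × G), ∃ d ∈ S, ∀ p ∈ t, ∀ q ∈ U p,
      d * q.1⁻¹ * q.2 ∈ S := by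
    intro t
    induction t using Finset.induction with
    | empty => exact ⟨1, S.one_mem, by simp⟩
    | @insert a t ha ih =>
      obtain ⟨d', hd'S, hd'⟩ := ih
      obtain ⟨d, hdS, ⟨s, hs, hds⟩, ⟨r, hr, hdr⟩⟩ := dir d' hd'S (D a) (hDS a)
      refine ⟨d, hdS, ?_⟩
      intro p hp q hq
      rcases Finset.mem_insert.1 hp with rfl | hp'
      · have : d * q.1⁻¹ * q.2 = r * (D p * q.1⁻¹ * q.2) := by rw [hdr]; group
        rw [this]
        exact S.mul_mem hr (interior_subset hq)
      · have : d * q.1⁻¹ * q.2 = s * (d' * q.1⁻¹ * q.2) := by rw [hds]; group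
        rw [this]
        exact S.mul_mem hs (hd' p hp' q hq)
  obtain ⟨d, hdS, hd⟩ := main F
  refine ⟨d, hdS, ?_⟩
  intro a b hab
  obtain ⟨p, hpF, hpU⟩ := Set.mem_iUnion₂.1 (hcover hab)
  exact hd p hpF (a, b) hpU
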